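/- (Structure of mutual information sets) For partitions π and σ of U, dit(π) ∩ dit(σ) = ⋃_{B∈π, C∈σ} (B − C) × (C − B), and this union is disjoint over pairs (B,C). -/
import Mathlib

open Finset

variable {U : Type*} [DecidableEq U] [Fintype U]

/-- The dit set of a partition: ordered pairs whose coordinates lie in no common block. -/
def dit (π : Finpartition (univ : Finset U)) : Finset (U × U) :=
  univ.filter fun p => ∀ B ∈ π.parts, ¬ (p.1 ∈ B ∧ p.2 ∈ B)

theorem stmt6 (π σ : Finpartition (univ : Finset U)) :
    dit π ∩ dit σ =
      (π.parts ×ˢ σ.parts).biUnion (fun BC => (BC.1 \ BC.2) ×ˢ (BC.2 \ BC.1)) ∧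
    ∀ BC ∈ π.parts ×ˢ σ.parts, ∀ BC' ∈ π.parts ×ˢ σ.parts, BC ≠ BC' →
      Disjoint ((BC.1 \ BC.2) ×ˢ (BC.2 \ BC.1)) ((BC'.1 \ BC'.2) ×ˢ (BC'.2 \ BC'.1)) := by
  constructor
  · ext ⟨x, y⟩
    simp only [dit, Finset.mem_inter, Finset.mem_filter, Finset.mem_univ, true_and,
      Finset.mem_biUnion, Finset.mem_product, Finset.mem_sdiff]
    constructor
    · rintro ⟨hπ, hσ⟩
      obtain ⟨B, ⟨hB, hxB⟩, -⟩ := π.existsUnique_mem (Finset.mem_univ x)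
      obtain ⟨C, ⟨hC, hyC⟩, -⟩ := σ.existsUnique_mem (Finset.mem_univ y)
      refine ⟨(B, C), ⟨hB, hC⟩, ⟨hxB, fun hxC => hσ C hC ⟨hxC, hyC⟩⟩,
        ⟨hyC, fun hyB => hπ B hB ⟨hxB, hyB⟩⟩⟩
    · rintro ⟨⟨B, C⟩, ⟨hB, hC⟩, ⟨hxB, hxC⟩, hyC, hyB⟩
      refine ⟨fun B' hB' ⟨hx, hy⟩ => ?_, fun C' hC' ⟨hx, hy⟩ => ?_⟩
      · exact hyB (π.eq_of_mem_parts hB' hB hx hxB ▸ hy)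
      · exact hxC (σ.eq_of_mem_parts hC' hC hy hyC ▸ hx)
  · rintro ⟨B, C⟩ hBC ⟨B', C'⟩ hBC' hne
    simp only [Finset.mem_product] at hBC hBC'
    rw [Finset.disjoint_left]
    rintro ⟨x, y⟩ h1 h2
    simp only [Finset.mem_product, Finset.mem_sdiff] at h1 h2
    exact hne (by
      rw [Prod.mk.injEq]
      exact ⟨π.eq_of_mem_parts hBC.1 hBC'.1 h1.1.1 h2.1.1,
        σ.eq_of_mem_parts hBC.2 hBC'.2 h1.2.1 h2.2.1⟩)
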